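/- arXiv:1509.05635 — 2 statements merged into one kernel-verified Lean document; each statement's English description precedes it below -/
import Mathlib

section
/- Let T be a finite tree with a set X of terminal pairs of edges, and let T_M be the once-subdivided tree as above. If E' is a multicut of T_M with respect to {(n_e, n_f) : {e,f} ∈ X}, then in each connected component of T_M − E', the set of original edges e of T with n_e in that component forms a connected subtree of T containing no terminal pair of edges. -/
/-- The once-subdivided tree `T_M`: one vertex for each vertex of `T`
(as `Sum.inl v`) and one for each edge of `T` (as `Sum.inr e`), with
`n_v` adjacent to `n_e` exactly when `v` is an endpoint of `e`. -/
def subdiv {V : Type*} (T : SimpleGraph V) : SimpleGraph (V ⊕ T.edgeSet) :=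
  SimpleGraph.fromRel (fun a b =>
    ∃ (v : V) (e : T.edgeSet), a = Sum.inl v ∧ b = Sum.inr e ∧ v ∈ (e : Sym2 V))

/-- The edges of `T` whose subdivision vertices lie in the connected component
of `w` in `T_M` minus the multicut `E'`. -/
def compEdges {V : Type*} (T : SimpleGraph V) (E' : Set (Sym2 (V ⊕ T.edgeSet)))
    (w : V ⊕ T.edgeSet) : Set (Sym2 V) :=
  {g | ∃ hg : g ∈ T.edgeSet,
    ((subdiv T).deleteEdges E').Reachable w (Sum.inr ⟨g, hg⟩)}

/-- Anchor predicate: `u` is the vertex `a` (if `a` is a vertex-vertex) or an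
endpoint of the edge `a` (if `a` is an edge-vertex). -/
def anch {V : Type*} {T : SimpleGraph V} (a : V ⊕ T.edgeSet) (u : V) : Prop :=
  a = Sum.inl u ∨ ∃ e : T.edgeSet, a = Sum.inr e ∧ u ∈ (e : Sym2 V)

lemma mem_compEdges {V : Type*} {T : SimpleGraph V} {E' : Set (Sym2 (V ⊕ T.edgeSet))}
    {w : V ⊕ T.edgeSet} (e : T.edgeSet)
    (h : ((subdiv T).deleteEdges E').Reachable w (Sum.inr e)) :
    (e : Sym2 V) ∈ compEdges T E' w := ⟨e.2, h⟩

lemma edgeStep {V : Type*} {T : SimpleGraph V} {E' : Set (Sym2 (V ⊕ T.edgeSet))}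
    {w : V ⊕ T.edgeSet} {e : Sym2 V} (he : e ∈ compEdges T E' w) {u x : V}
    (hu : u ∈ e) (hx : x ∈ e) :
    (SimpleGraph.fromEdgeSet (compEdges T E' w)).Reachable u x := by
  by_cases h : u = x
  · subst h; rfl
  · refine SimpleGraph.Adj.reachable ?_
    rw [SimpleGraph.fromEdgeSet_adj]
    have : e = s(u, x) := (Sym2.mem_and_mem_iff h).1 ⟨hu, hx⟩
    exact ⟨this ▸ he, h⟩

lemma key {V : Type*} (T : SimpleGraph V) (E' : Set (Sym2 (V ⊕ T.edgeSet)))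
    (w : V ⊕ T.edgeSet) :
    ∀ {a b : V ⊕ T.edgeSet}, ((subdiv T).deleteEdges E').Walk a b →
      ((subdiv T).deleteEdges E').Reachable w a →
      ∀ {u v : V}, anch a u → anch b v →
      (SimpleGraph.fromEdgeSet (compEdges T E' w)).Reachable u v := by
  intro a b p
  induction p with
  | nil =>
    intro hwa u v hu hv
    rcases hu with rfl | ⟨e, rfl, hue⟩
    · rcases hv with h | ⟨f, h, _⟩
      · exact (Sum.inl.inj h) ▸ SimpleGraph.Reachable.refl _
      · exact absurd h (by simp)
    · rcases hv with h | ⟨f, h, hvf⟩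
      · exact absurd h (by simp)
      · have : e = f := Sum.inr.inj h
        subst this
        exact edgeStep (mem_compEdges e hwa) hue hvf
  | @cons a c b hadj q ih =>
    intro hwa u v hu hv
    have hwc : ((subdiv T).deleteEdges E').Reachable w c :=
      hwa.trans hadj.reachable
    have hadj' := hadj.1
    rw [subdiv, SimpleGraph.fromRel_adj] at hadj'
    rcases hadj'.2 with ⟨x, e, rfl, rfl, hxe⟩ | ⟨x, e, rfl, rfl, hxe⟩
    · -- a = inl x, c = inr e
      rcases hu with h | ⟨f, h, _⟩
      · have : u = x := Sum.inl.inj h.symm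
        subst this
        exact ih hwc (Or.inr ⟨e, rfl, hxe⟩) hv
      · exact absurd h (by simp)
    · -- a = inr e, c = inl x
      rcases hu with h | ⟨f, h, hue⟩
      · exact absurd h (by simp)
      · have hef : e = f := Sum.inr.inj h
        subst hef
        refine SimpleGraph.Reachable.trans ?_ (ih hwc (Or.inl rfl) hv)
        exact edgeStep (mem_compEdges e hwa) hue hxe

/-- If `E'` is a multicut of the once-subdivided tree `T_M` with
respect to the terminal pairs coming from `X`, then in each connected component
of `T_M − E'` the set of original edges of `T` whose subdivision vertices lie in
that component forms a connected subtree of `T` containing no terminal pair. -/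
theorem stmt_9 {V : Type*} [Fintype V] [DecidableEq V]
    (T : SimpleGraph V) (hT : T.IsTree)
    (X : Sym2 V → Sym2 V → Prop) (hX : Symmetric X)
    (E' : Set (Sym2 (V ⊕ T.edgeSet)))
    (hcut : ∀ e f : T.edgeSet, X ↑e ↑f →
      ¬((subdiv T).deleteEdges E').Reachable (Sum.inr e) (Sum.inr f)) :
    ∀ w : V ⊕ T.edgeSet,
      (∀ u v : V,
        (∃ g ∈ compEdges T E' w, u ∈ g) → (∃ g ∈ compEdges T E' w, v ∈ g) →
        (SimpleGraph.fromEdgeSet (compEdges T E' w)).Reachable u v) ∧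
      (∀ g ∈ compEdges T E' w, ∀ h ∈ compEdges T E' w, ¬X g h) := by
  intro w
  constructor
  · rintro u v ⟨g, ⟨hg, hrg⟩, hug⟩ ⟨h, ⟨hh, hrh⟩, hvh⟩
    obtain ⟨p⟩ := hrg.symm.trans hrh
    exact key T E' w p hrg (Or.inr ⟨⟨g, hg⟩, rfl, hug⟩) (Or.inr ⟨⟨h, hh⟩, rfl, hvh⟩)
  · rintro g ⟨hg, hrg⟩ h ⟨hh, hrh⟩ hXgh
    exact hcut ⟨g, hg⟩ ⟨h, hh⟩ hXgh (hrg.symm.trans hrh)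
end

section
/- Let γ : [0,1] → ℝ² be a piecewise-linear path with vertices p₀, …, p_k (traversed in order), and suppose γ is increasing-chord. Then for every i, the closed halfplane {x ∈ ℝ² : ⟨x − p_{i+1}, p_{i+1} − p_i⟩ ≥ 0} contains all subsequent vertices p_j with j ≥ i + 1. -/
open scoped RealInnerProductSpace

/-- If a piecewise-linear path `γ : [0,1] → ℝ²` with breakpoints
`p 0, …, p k` (at parameters `τ 0 < … < τ k`, consecutive breakpoints distinct)
is increasing-chord, then for every `i < k` the closed halfplane
`{x : ⟪x − p (i+1), p (i+1) − p i⟫ ≥ 0}` contains all later vertices `p j`,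
`j ≥ i + 1`. -/
theorem stmt_15 (k : ℕ) (p : ℕ → EuclideanSpace ℝ (Fin 2)) (τ : ℕ → ℝ)
    (γ : ℝ → EuclideanSpace ℝ (Fin 2))
    (hτ0 : τ 0 = 0) (hτk : τ k = 1)
    (hmono : ∀ i < k, τ i < τ (i + 1))
    (hne : ∀ i < k, p i ≠ p (i + 1))
    (hvert : ∀ i ≤ k, γ (τ i) = p i)
    (haff : ∀ i < k, ∀ s : ℝ, 0 ≤ s → s ≤ 1 →
      γ ((1 - s) * τ i + s * τ (i + 1)) = (1 - s) • p i + s • p (i + 1))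
    (hic : ∀ a b c d : ℝ, 0 ≤ a → a ≤ b → b ≤ c → c ≤ d → d ≤ 1 →
      dist (γ b) (γ c) ≤ dist (γ a) (γ d)) :
    ∀ i j : ℕ, i < k → i + 1 ≤ j → j ≤ k →
      0 ≤ ⟪p j - p (i + 1), p (i + 1) - p i⟫ := by
  intro i j hik hij hjk
  -- monotonicity of τ up to k
  have hτle : ∀ m n : ℕ, m ≤ n → n ≤ k → τ m ≤ τ n := by
    intro m n hmn hnk
    induction n with
    | zero =>
      have : m = 0 := Nat.le_zero.mp hmn
      simp [this]
    | succ n ih =>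
      rcases Nat.lt_or_ge m (n + 1) with h | h
      · have h1 : τ m ≤ τ n := ih (Nat.lt_succ_iff.mp h) (by omega)
        exact le_of_lt (lt_of_le_of_lt h1 (hmono n (by omega)))
      · have : m = n + 1 := le_antisymm hmn h
        simp [this]
  have hi1k : i + 1 ≤ k := hik
  have hτi0 : 0 ≤ τ i := hτ0 ▸ hτle 0 i (Nat.zero_le _) (le_of_lt hik)
  have hτii1 : τ i ≤ τ (i + 1) := le_of_lt (hmono i hik)
  have hτi1j : τ (i + 1) ≤ τ j := hτle (i + 1) j hij hjk
  have hτj1 : τ j ≤ 1 := hτk ▸ hτle j k hjk le_rfl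
  set u : EuclideanSpace ℝ (Fin 2) := p (i + 1) - p j with hu
  set w : EuclideanSpace ℝ (Fin 2) := p (i + 1) - p i with hw
  have hwne : w ≠ 0 := sub_ne_zero.mpr (Ne.symm (hne i hik))
  have key : ∀ t : ℝ, 0 ≤ t → t ≤ 1 →
      2 * t * ⟪u, w⟫ ≤ t ^ 2 * ‖w‖ ^ 2 := by
    intro t ht0 ht1
    have hs0 : (0:ℝ) ≤ 1 - t := by linarith
    have hs1 : (1:ℝ) - t ≤ 1 := by linarith
    have hγq := haff i hik (1 - t) hs0 hs1
    set a : ℝ := (1 - (1 - t)) * τ i + (1 - t) * τ (i + 1) with ha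
    have ha0 : 0 ≤ a := by
      have : 0 ≤ τ (i+1) := le_trans hτi0 hτii1
      nlinarith
    have ha1 : a ≤ τ (i + 1) := by nlinarith
    have hd := hic a (τ (i + 1)) (τ j) (τ j) ha0 ha1 hτi1j le_rfl hτj1
    rw [hvert (i + 1) hi1k, hvert j hjk, hγq] at hd
    have hq : (1 - (1 - t)) • p i + (1 - t) • p (i + 1) - p j = u - t • w := by
      simp only [hu, hw, smul_sub, sub_smul, one_smul]
      abel
    rw [dist_eq_norm, dist_eq_norm, hq] at hd
    have hsq : ‖u‖ ^ 2 ≤ ‖u - t • w‖ ^ 2 :=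
      pow_le_pow_left₀ (norm_nonneg _) hd 2
    have hexp : ‖u - t • w‖ ^ 2 = ‖u‖ ^ 2 - 2 * ⟪u, t • w⟫ + ‖t • w‖ ^ 2 :=
      norm_sub_sq_real u (t • w)
    have hin : ⟪u, t • w⟫ = t * ⟪u, w⟫ := real_inner_smul_right u w t
    have hns : ‖t • w‖ ^ 2 = t ^ 2 * ‖w‖ ^ 2 := by
      rw [norm_smul, mul_pow, Real.norm_eq_abs, sq_abs]
    rw [hexp, hin, hns] at hsq
    linarith
  -- conclude ⟪u, w⟫ ≤ 0
  have hiw : ⟪u, w⟫ ≤ 0 := by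
    by_contra hpos
    push_neg at hpos
    set c : ℝ := ⟪u, w⟫
    have hW : 0 < ‖w‖ ^ 2 := by
      have := norm_pos_iff.mpr hwne
      positivity
    set t : ℝ := min 1 (c / ‖w‖ ^ 2) with ht
    have ht0 : 0 < t := lt_min one_pos (div_pos hpos hW)
    have ht1 : t ≤ 1 := min_le_left _ _
    have htc : t ≤ c / ‖w‖ ^ 2 := min_le_right _ _
    have hk := key t (le_of_lt ht0) ht1
    have h2 : t ^ 2 * ‖w‖ ^ 2 ≤ t * c := by
      have : t * ‖w‖ ^ 2 ≤ c := by
        rw [← div_mul_cancel₀ c (ne_of_gt hW)]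
        exact mul_le_mul_of_nonneg_right htc (le_of_lt hW)
      calc t ^ 2 * ‖w‖ ^ 2 = t * (t * ‖w‖ ^ 2) := by ring
        _ ≤ t * c := mul_le_mul_of_nonneg_left this (le_of_lt ht0)
    nlinarith
  have : p j - p (i + 1) = -u := by rw [hu]; abel
  rw [this, inner_neg_left]
  linarith
end
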